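/- arXiv:1202.3213 — 3 statements merged into one kernel-verified Lean document; each statement's English description precedes it below -/
import Mathlib

section
/- Let ζ = e^{2πi/5} and Z₀ = [[ζ, ζ+ζ³],[ζ², ζ²+ζ]]⁻¹ · [[ζ², ζ⁴],[ζ⁴, ζ³]]. Then Z₀ belongs to the Siegel upper half-space 𝔥₂, i.e. Z₀ is a symmetric 2×2 complex matrix whose imaginary part is positive definite. -/
open Matrix Complex

noncomputable section

/-- `e z = exp(2πiz)` -/
def e (z : ℂ) : ℂ := Complex.exp (2 * Real.pi * Complex.I * z)

/-- The Siegel upper half-space: symmetric complex matrices with positive definite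
imaginary part. -/
def SiegelHalfSpace (g : ℕ) : Set (Matrix (Fin g) (Fin g) ℂ) :=
  {Z | Z.IsSymm ∧ (Matrix.of fun i j => (Z i j).im).PosDef}

/-- The theta function `Θ(u, Z; r, s)`. -/
def Theta {g : ℕ} (u : Fin g → ℂ) (Z : Matrix (Fin g) (Fin g) ℂ)
    (r s : Fin g → ℝ) : ℂ :=
  ∑' x : Fin g → ℤ,
    e ((fun i => (x i : ℂ) + (r i : ℂ)) ⬝ᵥ Z.mulVec (fun i => (x i : ℂ) + (r i : ℂ)) / 2
      + (fun i => (x i : ℂ) + (r i : ℂ)) ⬝ᵥ (u + fun i => (s i : ℂ)))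

/-- The theta constant `Φ_{[r;s]}(Z)`. -/
def PhiTheta {g : ℕ} (r s : Fin g → ℝ) (Z : Matrix (Fin g) (Fin g) ℂ) : ℂ :=
  Theta 0 Z r s / Theta 0 Z 0 0

/-- The standard symplectic matrix `J`. -/
def Jmat (g : ℕ) : Matrix (Fin g ⊕ Fin g) (Fin g ⊕ Fin g) ℤ :=
  Matrix.fromBlocks 0 (-1) 1 0

/-- Membership in `Sp_{2g}(ℤ)`. -/
def IsSymplectic {g : ℕ} (γ : Matrix (Fin g ⊕ Fin g) (Fin g ⊕ Fin g) ℤ) : Prop :=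
  γᵀ * Jmat g * γ = Jmat g

/-- `ζ = e^{2πi/5}`. -/
def zeta5 : ℂ := Complex.exp (2 * Real.pi * Complex.I / 5)

/-- The CM point `Z₀` attached to `ℚ(ζ₅)`. -/
def Zcm : Matrix (Fin 2) (Fin 2) ℂ :=
  (!![zeta5, zeta5 + zeta5 ^ 3; zeta5 ^ 2, zeta5 ^ 2 + zeta5])⁻¹ *
    !![zeta5 ^ 2, zeta5 ^ 4; zeta5 ^ 4, zeta5 ^ 3]

lemma zeta5_pow (k : ℕ) :
    zeta5 ^ k = Complex.exp (((k * (2 * Real.pi / 5) : ℝ) : ℂ) * Complex.I) := by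
  rw [zeta5, ← Complex.exp_nat_mul]; congr 1; push_cast; ring

lemma zeta5_pow_im (k : ℕ) : (zeta5 ^ k).im = Real.sin (k * (2 * Real.pi / 5)) := by
  rw [zeta5_pow, Complex.exp_im]; simp

lemma zeta5_pow_five : zeta5 ^ 5 = 1 := by
  rw [zeta5, ← Complex.exp_nat_mul]
  rw [show (5:ℕ) * (2 * (Real.pi:ℂ) * Complex.I / 5) = 2 * Real.pi * Complex.I by push_cast; ring]
  exact Complex.exp_two_pi_mul_I

lemma sin_pos_1 : 0 < Real.sin (2 * Real.pi / 5) := by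
  apply Real.sin_pos_of_pos_of_lt_pi <;> [positivity; nlinarith [Real.pi_pos]]

lemma sin_pos_2 : 0 < Real.sin (4 * Real.pi / 5) := by
  apply Real.sin_pos_of_pos_of_lt_pi <;> [positivity; nlinarith [Real.pi_pos]]

lemma sin_lt : Real.sin (4 * Real.pi / 5) < Real.sin (2 * Real.pi / 5) := by
  have h : Real.sin (4 * Real.pi / 5) = Real.sin (Real.pi / 5) := by
    rw [show (4:ℝ) * Real.pi / 5 = Real.pi - Real.pi/5 by ring, Real.sin_pi_sub]
  rw [h]
  apply Real.sin_lt_sin_of_lt_of_le_pi_div_two <;> nlinarith [Real.pi_pos]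

lemma zeta5_sq_ne_one : zeta5 ^ 2 ≠ 1 := by
  intro h
  have := zeta5_pow_im 2
  rw [h] at this
  simp at this
  rw [show (2:ℝ) * (2 * Real.pi / 5) = 4 * Real.pi / 5 by ring] at this
  exact absurd this.symm (ne_of_gt sin_pos_2)

lemma zeta5_ne_one : zeta5 ≠ 1 := by
  intro h
  have := zeta5_pow_im 1
  rw [pow_one, h] at this
  simp at this
  exact absurd this.symm (ne_of_gt sin_pos_1)

lemma zeta5_cyclotomic : 1 + zeta5 + zeta5^2 + zeta5^3 + zeta5^4 = 0 := by
  have h5 := zeta5_pow_five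
  have h : (zeta5 - 1) * (1 + zeta5 + zeta5^2 + zeta5^3 + zeta5^4) = 0 := by
    linear_combination h5
  rcases mul_eq_zero.mp h with h' | h'
  · exact absurd (sub_eq_zero.mp h') zeta5_ne_one
  · exact h'

lemma Zcm_eq : Zcm = !![zeta5^2 - zeta5^3, -1 - zeta5^2; -1 - zeta5^2, -zeta5^4] := by
  have h5 := zeta5_pow_five
  have hΦ := zeta5_cyclotomic
  set A : Matrix (Fin 2) (Fin 2) ℂ := !![zeta5, zeta5 + zeta5 ^ 3; zeta5 ^ 2, zeta5 ^ 2 + zeta5] with hA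
  have hdet : A.det = zeta5^2 - 1 := by
    simp [hA, Matrix.det_fin_two_of]; linear_combination (-1 : ℂ)*h5
  have hunit : IsUnit A.det := by
    rw [hdet]
    exact (sub_ne_zero.mpr zeta5_sq_ne_one).isUnit
  have hAZ : A * !![zeta5^2 - zeta5^3, -1 - zeta5^2; -1 - zeta5^2, -zeta5^4]
      = !![zeta5 ^ 2, zeta5 ^ 4; zeta5 ^ 4, zeta5 ^ 3] := by
    ext i j
    fin_cases i <;> fin_cases j <;>
      simp [hA, Matrix.mul_apply, Fin.sum_univ_two] <;>
      first
        | linear_combination (-1 : ℂ) * h5 - hΦ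
        | linear_combination (-zeta5^2 - 1) * h5 - hΦ
        | linear_combination (-zeta5 - 1) * h5 - hΦ
  rw [Zcm, ← hAZ, ← Matrix.mul_assoc, Matrix.nonsing_inv_mul A hunit, Matrix.one_mul]

lemma im2 : (zeta5^2).im = Real.sin (4*Real.pi/5) := by
  rw [zeta5_pow_im, show ((2:ℕ):ℝ) * (2*Real.pi/5) = 4*Real.pi/5 by push_cast; ring]

lemma im3 : (zeta5^3).im = -Real.sin (4*Real.pi/5) := by
  rw [zeta5_pow_im, show ((3:ℕ):ℝ) * (2*Real.pi/5) = Real.pi/5 + Real.pi by push_cast; ring,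
    Real.sin_add_pi, show (4:ℝ)*Real.pi/5 = Real.pi - Real.pi/5 by ring, Real.sin_pi_sub]

lemma im4 : (zeta5^4).im = -Real.sin (2*Real.pi/5) := by
  rw [zeta5_pow_im, show ((4:ℕ):ℝ) * (2*Real.pi/5) = 2*Real.pi - 2*Real.pi/5 by push_cast; ring,
    Real.sin_two_pi_sub]

/-- The CM point `Z₀` lies in the Siegel upper half-space `𝔥₂`. -/
theorem Zcm_mem_siegel : Zcm ∈ SiegelHalfSpace 2 := by
  constructor
  · rw [Matrix.IsSymm, Zcm_eq]
    ext i j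
    fin_cases i <;> fin_cases j <;> simp
  · rw [Matrix.posDef_iff_dotProduct_mulVec]
    constructor
    · rw [Matrix.IsHermitian]
      ext i j
      fin_cases i <;> fin_cases j <;> simp [Zcm_eq]
    · intro x hx
      have hx' : x 0 ≠ 0 ∨ x 1 ≠ 0 := by
        by_contra h
        push_neg at h
        exact hx (funext fun i => by fin_cases i <;> simp [h.1, h.2])
      have s1 := sin_pos_1
      have s2 := sin_pos_2
      have slt := sin_lt
      simp only [dotProduct, Matrix.mulVec, Fin.sum_univ_two, Matrix.of_apply,
        Zcm_eq, Pi.star_apply, star_trivial]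
      simp only [Matrix.cons_val_zero, Matrix.cons_val_one, Matrix.head_cons]
      simp only [Complex.sub_im, Complex.neg_im, Complex.one_im, im2, im3, im4]
      rcases hx' with h | h
      · nlinarith [sq_nonneg (x 0 - x 1), sq_nonneg (x 1), sq_pos_of_ne_zero h]
      · nlinarith [sq_nonneg (x 0 - x 1), sq_nonneg (x 0), sq_pos_of_ne_zero h]
end
end

section
/- Let K be a number field and let x be an algebraic integer such that K(x)/K is a Galois extension. Let a, b be nonzero integers with |a| > 2|b|, and let n be a nonzero integer. Then a·x + b ≠ 0 and K(x) = K((a·x + b)ⁿ). -/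
open IntermediateField Polynomial

noncomputable def Complex.abs : AbsoluteValue ℂ ℝ :=
  IsAbsoluteValue.toAbsoluteValue (norm : ℂ → ℝ)

@[simp] lemma Complex.abs_intCast (n : ℤ) : Complex.abs (n : ℂ) = |(n : ℝ)| :=
  Complex.norm_intCast n

lemma no_zeta (L : Type*) [Field L] [NumberField L] (a b : ℤ) (ha : a ≠ 0) (hb : b ≠ 0)
    (hab : 2 * |b| < |a|) (ζ t : L) (hζint : IsIntegral ℤ ζ) (ht : IsIntegral ℤ t)
    (m : ℕ) (hm : 0 < m) (hζm : ζ ^ m = 1) (hζ1 : ζ ≠ 1)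
    (heq : (a : L) * t = (b : L) * (ζ - 1)) : False := by
  have haL : (a : L) ≠ 0 := Int.cast_ne_zero.mpr ha
  have hbL : (b : L) ≠ 0 := Int.cast_ne_zero.mpr hb
  have ht0 : t ≠ 0 := by
    intro h
    apply sub_ne_zero.mpr hζ1
    have : (b : L) * (ζ - 1) = 0 := by rw [← heq, h, mul_zero]
    exact (mul_eq_zero.mp this).resolve_left hbL
  set N : ℚ := Algebra.norm ℚ t with hN
  obtain ⟨M, hM⟩ : ∃ M : ℤ, algebraMap ℤ ℚ M = N :=
    IsIntegrallyClosed.isIntegral_iff.mp (Algebra.isIntegral_norm (K := ℚ) ht)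
  have hN0 : N ≠ 0 := Algebra.norm_ne_zero_iff.mpr ht0
  have hM0 : M ≠ 0 := by
    intro h; apply hN0; rw [← hM, h, map_zero]
  have hprod : algebraMap ℚ ℂ N = ∏ φ : L →ₐ[ℚ] ℂ, φ t :=
    Algebra.norm_eq_prod_embeddings ℚ ℂ t
  set r : ℝ := 2 * |(b : ℝ)| / |(a : ℝ)| with hr
  have haR : (0:ℝ) < |(a : ℝ)| := by
    rw [abs_pos]; exact_mod_cast ha
  have hbound : ∀ φ : L →ₐ[ℚ] ℂ, Complex.abs (φ t) ≤ r := by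
    intro φ
    have h1 : (a : ℂ) * φ t = (b : ℂ) * (φ ζ - 1) := by
      have := congrArg φ heq
      simpa [map_mul, map_sub, map_one] using this
    have hζabs : Complex.abs (φ ζ) = 1 := by
      have h2 : Complex.abs (φ ζ) ^ m = 1 := by
        rw [← map_pow, ← map_pow, hζm]; simp
      rcases lt_trichotomy (Complex.abs (φ ζ)) 1 with h | h | h
      · exact absurd h2 (ne_of_lt (pow_lt_one₀ (AbsoluteValue.nonneg _ _) h hm.ne'))
      · exact h
      · exact absurd h2 (ne_of_gt (one_lt_pow₀ h hm.ne'))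
    have h3 : Complex.abs (φ ζ - 1) ≤ 2 := by
      calc Complex.abs (φ ζ - 1) ≤ Complex.abs (φ ζ) + Complex.abs 1 :=
            AbsoluteValue.sub_le_add _ _ _
        _ = 2 := by norm_num [hζabs]
    have h4 : |(a:ℝ)| * Complex.abs (φ t) = |(b:ℝ)| * Complex.abs (φ ζ - 1) := by
      have := congrArg Complex.abs h1
      simpa [map_mul, Complex.abs_intCast] using this
    rw [hr, le_div_iff₀ haR]
    nlinarith [abs_nonneg (b:ℝ), AbsoluteValue.nonneg Complex.abs (φ ζ - 1)]
  have hcard : Fintype.card (L →ₐ[ℚ] ℂ) ≠ 0 := by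
    rw [AlgHom.card]
    exact Module.finrank_pos.ne'
  have habs : (|M| : ℝ) = ∏ φ : L →ₐ[ℚ] ℂ, Complex.abs (φ t) := by
    have := congrArg Complex.abs hprod
    rw [map_prod] at this
    rw [← this, ← hM]
    simp [map_intCast, Complex.abs_intCast]
  have h5 : (|M| : ℝ) ≤ r ^ Fintype.card (L →ₐ[ℚ] ℂ) := by
    rw [habs]
    have := Finset.prod_le_prod (s := (Finset.univ : Finset (L →ₐ[ℚ] ℂ)))
      (fun φ _ => AbsoluteValue.nonneg Complex.abs (φ t)) (fun φ _ => hbound φ)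
    calc ∏ φ : L →ₐ[ℚ] ℂ, Complex.abs (φ t) ≤ ∏ _φ : L →ₐ[ℚ] ℂ, r := this
      _ = r ^ Fintype.card (L →ₐ[ℚ] ℂ) := by rw [Finset.prod_const, Finset.card_univ]
  have hr1 : r < 1 := by
    rw [hr, div_lt_one haR]
    have : ((2 * |b| : ℤ) : ℝ) < ((|a| : ℤ) : ℝ) := by exact_mod_cast hab
    push_cast at this
    linarith
  have hrnn : 0 ≤ r := by positivity
  have h6 : r ^ Fintype.card (L →ₐ[ℚ] ℂ) < 1 := pow_lt_one₀ hrnn hr1 hcard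
  have h7 : (1:ℝ) ≤ (|M| : ℝ) := by exact_mod_cast Int.one_le_abs hM0
  linarith

/-- If `x` is an algebraic integer with `K(x)/K` Galois and `|a| > 2|b|`, then
`K(x) = K((ax+b)ⁿ)` for every nonzero integer `n`. -/
theorem adjoin_pow_eq_adjoin (K E : Type*) [Field K] [NumberField K] [Field E]
    [Algebra K E] (x : E) (hx : IsIntegral ℤ x)
    (hGal : IsGalois K (IntermediateField.adjoin K {x}))
    (a b : ℤ) (ha : a ≠ 0) (hb : b ≠ 0) (hab : 2 * |b| < |a|)
    (n : ℤ) (hn : n ≠ 0) :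
    (a : E) * x + (b : E) ≠ 0 ∧
    IntermediateField.adjoin K {((a : E) * x + (b : E)) ^ n}
      = IntermediateField.adjoin K {x} := by
  haveI := hGal
  have habs1 : (1:ℤ) ≤ |b| := Int.one_le_abs hb
  have hainj := (algebraMap K E).injective
  -- Part 1 : a x + b ≠ 0
  have hy0 : (a : E) * x + (b : E) ≠ 0 := by
    intro h
    have haE : (a : E) ≠ 0 := by
      intro h'
      apply ha
      have : algebraMap K E ((a:ℤ):K) = algebraMap K E 0 := by
        rw [map_zero, map_intCast, h']
      exact_mod_cast hainj this
    have hxq : x = algebraMap K E ((-b : K) / (a : K)) := by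
      rw [map_div₀, map_neg, map_intCast, map_intCast, eq_div_iff haE]
      linear_combination h
    have hint : IsIntegral ℤ ((-b : K) / (a : K)) := by
      rw [← isIntegral_algebraMap_iff (R := ℤ) hainj, ← hxq]
      exact hx
    have hint2 : IsIntegral ℤ ((-b : ℚ) / (a : ℚ)) := by
      have : algebraMap ℚ K ((-b : ℚ) / (a : ℚ)) = (-b : K) / (a : K) := by
        rw [map_div₀, map_neg, map_intCast, map_intCast]
      rw [← isIntegral_algebraMap_iff (algebraMap ℚ K).injective, this]
      exact hint
    obtain ⟨M, hM⟩ := IsIntegrallyClosed.isIntegral_iff.mp hint2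
    have haQ : (a:ℚ) ≠ 0 := Int.cast_ne_zero.mpr ha
    have : (M : ℚ) * a = -b := by
      rw [show ((M:ℤ):ℚ) = algebraMap ℤ ℚ M from rfl, hM]
      field_simp
    have hMa : M * a = -b := by exact_mod_cast this
    have hdvd : a ∣ b := ⟨-M, by linarith⟩
    have := Int.le_of_dvd (abs_pos.mpr hb) ((abs_dvd a |b|).mpr ((dvd_abs a b).mpr hdvd))
    omega
  refine ⟨hy0, ?_⟩
  -- Setup inside L
  set L : IntermediateField K E := IntermediateField.adjoin K {x} with hL
  have hxL : x ∈ L := IntermediateField.mem_adjoin_simple_self K x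
  set x' : L := ⟨x, hxL⟩ with hx'
  set y' : L := (a : L) * x' + (b : L) with hy'
  have hy'coe : (y' : E) = (a : E) * x + (b : E) := by push_cast [hy']; rfl
  have hy'0 : y' ≠ 0 := by
    intro h
    apply hy0
    rw [← hy'coe, h]; rfl
  set z' : L := y' ^ n with hz'
  have hz'coe : (z' : E) = ((a : E) * x + (b : E)) ^ n := by
    rw [hz', ← hy'coe]
    exact map_zpow₀ (L.val : L →+* E) y' n
  -- instances
  have hxK : IsIntegral K x := hx.tower_top
  haveI : FiniteDimensional K L := IntermediateField.adjoin.finiteDimensional hxK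
  haveI : IsScalarTower ℚ K L :=
    IsScalarTower.of_algebraMap_eq' (Subsingleton.elim _ _)
  haveI : FiniteDimensional ℚ L := FiniteDimensional.trans ℚ K L
  haveI : NumberField L := ⟨⟩
  have hx'int : IsIntegral ℤ x' := by
    rw [← isIntegral_algHom_iff (L.val.restrictScalars ℤ) Subtype.val_injective]
    exact hx
  -- key step
  have key : ∀ σ : L ≃ₐ[K] L, σ z' = z' → σ x' = x' := by
    intro σ hσz
    have haL : (a : L) ≠ 0 := Int.cast_ne_zero.mpr ha
    have hσy0 : σ y' ≠ 0 := fun h => hy'0 (by simpa using congrArg σ.symm h)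
    set ζ : L := σ y' / y' with hζ
    have hζn : ζ ^ n = 1 := by
      rw [hζ, div_zpow]
      rw [div_eq_one_iff_eq (zpow_ne_zero n hy'0)]
      calc σ y' ^ n = σ (y' ^ n) := (map_zpow₀ (σ : L →+* L) y' n).symm
        _ = y' ^ n := hσz
    have hζ0 : ζ ≠ 0 := div_ne_zero hσy0 hy'0
    have hζm : ζ ^ n.natAbs = 1 := by
      rcases Int.natAbs_eq n with h | h
      · rw [← zpow_natCast, ← h, hζn]
      · rw [← zpow_natCast]
        have : ζ ^ (-(n.natAbs : ℤ)) = 1 := by rw [← h, hζn]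
        rw [zpow_neg] at this
        exact inv_eq_one.mp this
    have hσy : σ y' = ζ * y' := (div_eq_iff hy'0).mp rfl
    have hσyexp : σ y' = (a : L) * σ x' + (b : L) := by
      rw [hy', map_add, map_mul, map_intCast, map_intCast]
    by_cases hζ1 : ζ = 1
    · have h2 : σ y' = y' := by rw [hσy, hζ1, one_mul]
      have h3 : (a : L) * σ x' + (b : L) = (a : L) * x' + (b : L) := by
        rw [← hσyexp, h2, hy']
      exact mul_left_cancel₀ haL (add_right_cancel h3)
    · exfalso
      have heq : (a : L) * (σ x' - ζ * x') = (b : L) * (ζ - 1) := by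
        have : (a : L) * σ x' + (b : L) = ζ * ((a : L) * x' + (b : L)) := by
          rw [← hσyexp, ← hy', hσy]
        ring_nf
        linear_combination this
      have hσxint : IsIntegral ℤ (σ x') := hx'int.map (σ.toAlgHom.restrictScalars ℤ)
      have hζint : IsIntegral ℤ ζ := by
        refine ⟨Polynomial.X ^ n.natAbs - Polynomial.C 1,
          Polynomial.monic_X_pow_sub_C 1 (Int.natAbs_ne_zero.mpr hn), ?_⟩
        simp [hζm]
      have htint : IsIntegral ℤ (σ x' - ζ * x') := hσxint.sub (hζint.mul hx'int)
      exact no_zeta L a b ha hb hab ζ _ hζint htint n.natAbs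
        (Int.natAbs_pos.mpr hn) hζm hζ1 heq
  -- Galois correspondence
  set F : IntermediateField K L := IntermediateField.adjoin K {z'} with hF
  have hx'F : x' ∈ F := by
    rw [← IsGalois.fixedField_fixingSubgroup F]
    rintro ⟨σ, hσ⟩
    rw [IntermediateField.mem_fixingSubgroup_iff] at hσ
    exact key σ (hσ z' (IntermediateField.mem_adjoin_simple_self K z'))
  have hmap : F.map L.val = IntermediateField.adjoin K {((a : E) * x + (b : E)) ^ n} := by
    rw [hF, IntermediateField.adjoin_map, Set.image_singleton,
      show L.val z' = ((a : E) * x + (b : E)) ^ n from hz'coe]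
  apply le_antisymm
  · rw [IntermediateField.adjoin_simple_le_iff, ← hz'coe]
    exact z'.2
  · rw [hL, IntermediateField.adjoin_simple_le_iff, ← hmap]
    exact ⟨x', hx'F, rfl⟩
end

section
/- Let L be an abelian extension of a number field K and suppose L = K(x, y) for algebraic integers x, y ∈ L. Let ℓ = [L : K(x)], let a, b, c, d be nonzero integers with |a| > 2|b| and |c| > 2|d|, and let n, m be nonzero integers. Then c·y + d ≠ 0 and L = K( (a·x + b)ⁿ · (c·y + d)^{−mℓ} · N_{L/K(x)}((c·y + d)^m) ). -/
open IntermediateField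

section Auxiliary

variable {L : Type*} [Field L] [NumberField L]

/-- The `ℚ`-norm of an algebraic integer in a number field is a rational integer. -/
lemma aux_normZ_int (w : L) (hw : IsIntegral ℤ w) : ∃ z : ℤ, (z : ℚ) = Algebra.norm ℚ w := by
  have h : IsIntegral ℤ (Algebra.norm ℚ w) := Algebra.isIntegral_norm ℚ hw
  obtain ⟨z, hz⟩ := IsIntegrallyClosed.isIntegral_iff.mp h
  exact ⟨z, by exact_mod_cast hz⟩

lemma aux_norm_intCast_mul (t : ℤ) (w : L) :
    Algebra.norm ℚ ((t : L) * w) = (t : ℚ) ^ Module.finrank ℚ L * Algebra.norm ℚ w := by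
  rw [map_mul]
  congr 1
  rw [show ((t : L)) = algebraMap ℚ L (t : ℚ) by rw [map_intCast], Algebra.norm_algebraMap]

/-- If `2|d| < |c|` and `y` is an algebraic integer, then `c y + d ≠ 0`. -/
lemma aux_ne_zero (y : L) (hy : IsIntegral ℤ y) (c d : ℤ) (hd : d ≠ 0) (hcd : 2 * |d| < |c|) :
    (c : L) * y + (d : L) ≠ 0 := by
  intro h0
  set D := Module.finrank ℚ L with hD
  have hDpos : 0 < D := Module.finrank_pos
  obtain ⟨z, hz⟩ := aux_normZ_int y hy
  have h1 : (c : L) * y = (-d : ℤ) * (1 : L) := by push_cast; linear_combination h0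
  have h2 : Algebra.norm ℚ ((c : L) * y) = Algebra.norm ℚ (((-d : ℤ) : L) * (1 : L)) := by rw [h1]
  rw [aux_norm_intCast_mul, aux_norm_intCast_mul, map_one, mul_one, ← hz] at h2
  have h3 : c ^ D * z = (-d) ^ D := by exact_mod_cast h2
  have habs : |c| ^ D * |z| = |d| ^ D := by
    have := congrArg (fun t => |t|) h3
    simpa [abs_mul, abs_pow] using this
  rcases eq_or_ne z 0 with rfl | hz0
  · simp at habs
    exact hd (by simpa [pow_eq_zero_iff hDpos.ne'] using habs.symm)
  · have h1z : 1 ≤ |z| := Int.one_le_abs hz0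
    have hdc : |d| < |c| := by have := abs_nonneg d; omega
    have : |c| ^ D ≤ |d| ^ D := by
      calc |c| ^ D ≤ |c| ^ D * |z| := le_mul_of_one_le_right (by positivity) h1z
        _ = |d| ^ D := habs
    have h5 : |d| ^ D < |c| ^ D := pow_lt_pow_left₀ hdc (abs_nonneg d) hDpos.ne'
    omega

/-- Rigidity: if `a x' + b = ζ (a x + b)` with `x, x'` algebraic integers, `ζ` a root of
unity and `2|b| < |a|`, then `ζ = 1`. -/
lemma aux_root_of_unity_eq_one (x x' ζ : L) (hx : IsIntegral ℤ x) (hx' : IsIntegral ℤ x')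
    (a b : ℤ) (hb : b ≠ 0) (hab : 2 * |b| < |a|) (k : ℕ) (hk : k ≠ 0) (hζ : ζ ^ k = 1)
    (heq : (a : L) * x' + (b : L) = ζ * ((a : L) * x + (b : L))) : ζ = 1 := by
  have hζint : IsIntegral ℤ ζ := by
    refine ⟨Polynomial.X ^ k - 1, ?_, ?_⟩
    · simpa using Polynomial.monic_X_pow_sub_C (1 : ℤ) hk
    · simp [hζ]
  set e := x' - ζ * x with he_def
  have he : IsIntegral ℤ e := hx'.sub (hζint.mul hx)
  have key : (b : L) * (ζ - 1) = (a : L) * e := by rw [he_def]; linear_combination -heq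
  set D := Module.finrank ℚ L with hD
  have hDpos : 0 < D := Module.finrank_pos
  obtain ⟨z, hz⟩ := aux_normZ_int e he
  have h2 : (b : ℚ) ^ D * Algebra.norm ℚ (ζ - 1) = (a : ℚ) ^ D * (z : ℚ) := by
    have := congrArg (Algebra.norm ℚ) key
    rwa [aux_norm_intCast_mul, aux_norm_intCast_mul, ← hz] at this
  rcases eq_or_ne z 0 with rfl | hz0
  · have : Algebra.norm ℚ e = 0 := by rw [← hz]; norm_num
    have he0 : e = 0 := by rwa [Algebra.norm_eq_zero_iff] at this
    have hb0 : (b : L) * (ζ - 1) = 0 := by rw [key, he0, mul_zero]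
    have hbL : (b : L) ≠ 0 := Int.cast_ne_zero.mpr hb
    have : ζ - 1 = 0 := by
      rcases mul_eq_zero.mp hb0 with h | h
      · exact absurd h hbL
      · exact h
    exact sub_eq_zero.mp this
  · exfalso
    have hbound : |Algebra.norm ℚ (ζ - 1)| ≤ 2 ^ D := by
      have hemb := Algebra.norm_eq_prod_embeddings ℚ ℂ (ζ - 1)
      have hcard : Fintype.card (L →ₐ[ℚ] ℂ) = D := AlgHom.card ℚ L ℂ
      have habs : ‖algebraMap ℚ ℂ (Algebra.norm ℚ (ζ - 1))‖ ≤ 2 ^ D := by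
        rw [hemb]
        calc ‖∏ σ : L →ₐ[ℚ] ℂ, σ (ζ - 1)‖ = ∏ σ : L →ₐ[ℚ] ℂ, ‖σ (ζ - 1)‖ := norm_prod _ _
          _ ≤ ∏ σ : L →ₐ[ℚ] ℂ, 2 := by
              refine Finset.prod_le_prod (fun _ _ => norm_nonneg _) (fun σ _ => ?_)
              have h1 : ‖σ ζ‖ = 1 := by
                refine Complex.norm_eq_one_of_pow_eq_one ?_ hk
                rw [← map_pow, hζ, map_one]
              calc ‖σ (ζ - 1)‖ = ‖σ ζ - 1‖ := by rw [map_sub, map_one]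
                _ ≤ ‖σ ζ‖ + ‖(1 : ℂ)‖ := norm_sub_le _ _
                _ = 2 := by rw [h1, norm_one]; norm_num
          _ = 2 ^ D := by rw [Finset.prod_const, Finset.card_univ, hcard]
      rw [eq_ratCast (algebraMap ℚ ℂ), Complex.norm_ratCast] at habs
      exact_mod_cast habs
    have h1z : (1 : ℚ) ≤ |(z : ℚ)| := by exact_mod_cast Int.one_le_abs hz0
    have e1 : |(a : ℚ)| ^ D ≤ |(a : ℚ)| ^ D * |(z : ℚ)| :=
      le_mul_of_one_le_right (by positivity) h1z
    have e2 : |(a : ℚ)| ^ D * |(z : ℚ)| = |(b : ℚ)| ^ D * |Algebra.norm ℚ (ζ - 1)| := by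
      rw [← abs_pow, ← abs_pow, ← abs_mul, ← abs_mul, h2]
    have e3 : |(b : ℚ)| ^ D * |Algebra.norm ℚ (ζ - 1)| ≤ |(b : ℚ)| ^ D * 2 ^ D :=
      mul_le_mul_of_nonneg_left hbound (by positivity)
    have e4 : |(b : ℚ)| ^ D * 2 ^ D = (2 * |(b : ℚ)|) ^ D := by rw [mul_pow]; ring
    have hab' : 2 * |(b : ℚ)| < |(a : ℚ)| := by
      rw [← Int.cast_abs, ← Int.cast_abs]
      exact_mod_cast hab
    have e5 : (2 * |(b : ℚ)|) ^ D < |(a : ℚ)| ^ D :=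
      pow_lt_pow_left₀ hab' (by positivity) hDpos.ne'
    linarith

end Auxiliary

section NmDef

variable {K L : Type*} [Field K] [Field L] [Algebra K L] [FiniteDimensional K L]

/-- The "norm" of `L` over an intermediate field `F`, as a map `L → L` given by the product
of all `F`-automorphisms applied to the element. -/
noncomputable def auxNm (F : IntermediateField K L) : L →*₀ L where
  toFun z := ∏ σ : L ≃ₐ[F] L, σ z
  map_zero' := Finset.prod_eq_zero (Finset.mem_univ 1) (map_zero _)
  map_one' := by simp
  map_mul' z w := by simp [map_mul, Finset.prod_mul_distrib]

lemma auxNm_of_fixed (F : IntermediateField K L) (z : L) (hz : ∀ σ : L ≃ₐ[F] L, σ z = z) :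
    auxNm F z = z ^ Fintype.card (L ≃ₐ[F] L) := by
  show (∏ σ : L ≃ₐ[F] L, σ z) = _
  rw [Finset.prod_congr rfl (fun σ _ => hz σ), Finset.prod_const, Finset.card_univ]

lemma auxNm_comm (F : IntermediateField K L) (τ : L ≃ₐ[K] L)
    (hcomm : ∀ (σ : L ≃ₐ[F] L) (w : L), τ (σ w) = σ (τ w)) (z : L) :
    auxNm F (τ z) = τ (auxNm F z) := by
  show (∏ σ : L ≃ₐ[F] L, σ (τ z)) = τ (∏ σ : L ≃ₐ[F] L, σ z)
  rw [map_prod]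
  exact Finset.prod_congr rfl (fun σ _ => (hcomm σ z).symm)

lemma auxNm_fixed (F : IntermediateField K L) (σ' : L ≃ₐ[F] L) (β : L) :
    σ' (auxNm F β) = auxNm F β := by
  show σ' (∏ σ : L ≃ₐ[F] L, σ β) = ∏ σ : L ≃ₐ[F] L, σ β
  rw [map_prod]
  exact Fintype.prod_equiv (Equiv.mulLeft σ') _ _ (fun σ => rfl)

lemma aux_mem_fixedField (τ : L ≃ₐ[K] L) (z : L) (hz : τ z = z) :
    z ∈ fixedField (Subgroup.zpowers τ) := by
  rintro ⟨g, hg⟩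
  have hτ : τ ∈ MulAction.stabilizer (L ≃ₐ[K] L) z := hz
  exact (Subgroup.zpowers_le.mpr hτ) hg

/-- Converting a `zpow`-root-of-unity equation to a `pow` one. -/
lemma aux_zpow_one_natAbs {ζ : L} {k : ℤ} (h : ζ ^ k = 1) : ζ ^ k.natAbs = 1 := by
  rcases Int.natAbs_eq k with hk | hk
  · rw [← zpow_natCast ζ, ← hk, h]
  · rw [hk, zpow_neg, zpow_natCast, inv_eq_one] at h
    exact h

end NmDef

/-- Combining two generators of an abelian extension via a norm:
`L = K((ax+b)ⁿ (cy+d)^{−mℓ} N_{L/K(x)}((cy+d)^m))`. -/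
theorem primitive_generator_norm (K L : Type*) [Field K] [NumberField K] [Field L]
    [Algebra K L] [FiniteDimensional K L] [IsGalois K L]
    (habelian : ∀ σ τ : L ≃ₐ[K] L, σ * τ = τ * σ)
    (x y : L) (hxint : IsIntegral ℤ x) (hyint : IsIntegral ℤ y)
    (hxy : IntermediateField.adjoin K {x, y} = ⊤)
    (F : IntermediateField K L) (hF : F = IntermediateField.adjoin K {x})
    (ℓ : ℕ) (hℓ : ℓ = Module.finrank F L)
    (a b c d : ℤ) (ha : a ≠ 0) (hb : b ≠ 0) (hc : c ≠ 0) (hd : d ≠ 0)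
    (hab : 2 * |b| < |a|) (hcd : 2 * |d| < |c|)
    (n m : ℤ) (hn : n ≠ 0) (hm : m ≠ 0) :
    (c : L) * y + (d : L) ≠ 0 ∧
    IntermediateField.adjoin K
        {((a : L) * x + (b : L)) ^ n * ((c : L) * y + (d : L)) ^ (-(m * (ℓ : ℤ))) *
          algebraMap F L (Algebra.norm F (((c : L) * y + (d : L)) ^ m))}
      = ⊤ := by
  haveI : NumberField L := NumberField.of_module_finite K L
  set α : L := (a : L) * x + (b : L) with hα_def
  set β : L := (c : L) * y + (d : L) with hβ_def
  have hα : α ≠ 0 := aux_ne_zero x hxint a b hb hab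
  have hβ : β ≠ 0 := aux_ne_zero y hyint c d hd hcd
  refine ⟨hβ, ?_⟩
  -- setup
  have hℓpos : 0 < ℓ := by rw [hℓ]; exact Module.finrank_pos
  have hxF : x ∈ F := by rw [hF]; exact subset_adjoin K {x} rfl
  have hcomm : ∀ (τ : L ≃ₐ[K] L) (σ : L ≃ₐ[F] L) (z : L), τ (σ z) = σ (τ z) := by
    intro τ σ z
    have h := habelian (σ.restrictScalars K) τ
    have h2 := congrArg (fun g => (g : L ≃ₐ[K] L) z) h
    exact (by simpa using h2 : σ (τ z) = τ (σ z)).symm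
  have hcard : Fintype.card (L ≃ₐ[F] L) = ℓ := by
    rw [hℓ, ← Nat.card_eq_fintype_card]; exact IsGalois.card_aut_eq_finrank F L
  set P : L := auxNm F β with hP_def
  have hσβ : ∀ σ : L ≃ₐ[F] L, σ β ≠ 0 := fun σ h => hβ (by
    have := congrArg σ.symm h
    simpa using this)
  have hP : P ≠ 0 := by
    rw [hP_def]
    exact Finset.prod_ne_zero_iff.mpr (fun σ _ => hσβ σ)
  have hQP : algebraMap F L (Algebra.norm F (β ^ m)) = P ^ m := by
    rw [Algebra.norm_eq_prod_automorphisms]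
    show (∏ σ : L ≃ₐ[F] L, σ (β ^ m)) = _
    rw [Finset.prod_congr rfl (fun σ _ => map_zpow₀ σ β m), Finset.prod_zpow]
    rfl
  set γ : L := α ^ n * β ^ (-(m * (ℓ : ℤ))) * algebraMap F L (Algebra.norm F (β ^ m)) with hγ_def
  have hσx : ∀ σ : L ≃ₐ[F] L, σ x = x := fun σ => σ.commutes ⟨x, hxF⟩
  have hσα : ∀ σ : L ≃ₐ[F] L, σ α = α := by
    intro σ
    rw [hα_def, map_add, map_mul, map_intCast, map_intCast, hσx σ]
  have hNmα : auxNm F α = α ^ ℓ := by rw [auxNm_of_fixed F α hσα, hcard]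
  have hNmP : auxNm F P = P ^ ℓ := by
    rw [auxNm_of_fixed F P (fun σ => auxNm_fixed F σ β), hcard]
  have hNmγ : auxNm F γ = α ^ ((ℓ : ℤ) * n) := by
    rw [hγ_def, hQP, map_mul, map_mul, map_zpow₀, map_zpow₀, map_zpow₀, hNmα, hNmP]
    show (α ^ ℓ) ^ n * P ^ (-(m * (ℓ : ℤ))) * (P ^ ℓ) ^ m = _
    rw [← zpow_natCast α, ← zpow_natCast P, ← zpow_mul, ← zpow_mul, mul_assoc,
      ← zpow_add₀ hP, show -(m * (ℓ : ℤ)) + (ℓ : ℤ) * m = 0 by ring, zpow_zero, mul_one]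
  -- main step : any automorphism fixing γ is the identity
  have htriv : ∀ τ : L ≃ₐ[K] L, τ γ = γ → τ = 1 := by
    intro τ hτγ
    have haL : (a : L) ≠ 0 := Int.cast_ne_zero.mpr ha
    have hcL : (c : L) ≠ 0 := Int.cast_ne_zero.mpr hc
    -- Step A : τ fixes x
    have hNmτγ : τ (α ^ ((ℓ : ℤ) * n)) = α ^ ((ℓ : ℤ) * n) := by
      have h := congrArg (auxNm F) hτγ
      rwa [auxNm_comm F τ (hcomm τ) γ, hNmγ] at h
    have h2 : (τ α) ^ ((ℓ : ℤ) * n) = α ^ ((ℓ : ℤ) * n) := by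
      rwa [map_zpow₀] at hNmτγ
    have hζpow : (τ α / α) ^ ((ℓ : ℤ) * n) = 1 := by
      rw [div_zpow, h2, div_self (zpow_ne_zero _ hα)]
    have hk0 : ((ℓ : ℤ) * n).natAbs ≠ 0 := by
      simp only [Int.natAbs_ne_zero]
      exact mul_ne_zero (by exact_mod_cast hℓpos.ne') hn
    have hτxint : IsIntegral ℤ (τ x) := hxint.map (τ.restrictScalars ℤ)
    have hτα : τ α = (a : L) * (τ x) + (b : L) := by
      rw [hα_def, map_add, map_mul, map_intCast, map_intCast]
    have hζ1 : τ α / α = 1 := by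
      refine aux_root_of_unity_eq_one x (τ x) (τ α / α) hxint hτxint a b hb hab
        ((ℓ : ℤ) * n).natAbs hk0 (aux_zpow_one_natAbs hζpow) ?_
      rw [← hτα, div_mul_cancel₀ _ hα]
    have hτα' : τ α = α := by
      field_simp at hζ1
      exact hζ1
    have hτx : τ x = x := by
      have h3 : (a : L) * (τ x) + (b : L) = (a : L) * x + (b : L) := by rw [← hτα, hτα']
      exact mul_left_cancel₀ haL (add_right_cancel h3)
    -- Step B : τ fixes F pointwise, then τ fixes y
    have hτF : ∀ f : F, τ (algebraMap F L f) = algebraMap F L f := by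
      intro f
      have hFle : F ≤ fixedField (Subgroup.zpowers τ) := by
        rw [hF]
        exact adjoin_le_iff.mpr (fun z hz => by
          rw [Set.mem_singleton_iff.mp hz]
          exact aux_mem_fixedField τ x hτx)
      exact hFle f.2 ⟨τ, Subgroup.mem_zpowers τ⟩
    have hτQ : τ (algebraMap F L (Algebra.norm F (β ^ m))) = algebraMap F L (Algebra.norm F (β ^ m)) :=
      hτF _
    have hQ0 : algebraMap F L (Algebra.norm F (β ^ m)) ≠ 0 := by
      rw [hQP]; exact zpow_ne_zero _ hP
    have hexp : (τ β) ^ (-(m * (ℓ : ℤ))) = β ^ (-(m * (ℓ : ℤ))) := by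
      have h4 : τ γ = α ^ n * (τ β) ^ (-(m * (ℓ : ℤ))) *
          algebraMap F L (Algebra.norm F (β ^ m)) := by
        rw [hγ_def, map_mul, map_mul, map_zpow₀, map_zpow₀, hτα', hτQ]
      rw [hτγ, hγ_def] at h4
      have h5 := mul_right_cancel₀ hQ0 h4.symm
      exact mul_left_cancel₀ (zpow_ne_zero _ hα) h5
    have hexp2 : (τ β) ^ (m * (ℓ : ℤ)) = β ^ (m * (ℓ : ℤ)) := by
      rw [zpow_neg, zpow_neg] at hexp
      exact inv_injective hexp
    have hζ'pow : (τ β / β) ^ (m * (ℓ : ℤ)) = 1 := by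
      rw [div_zpow, hexp2, div_self (zpow_ne_zero _ hβ)]
    have hk1 : (m * (ℓ : ℤ)).natAbs ≠ 0 := by
      simp only [Int.natAbs_ne_zero]
      exact mul_ne_zero hm (by exact_mod_cast hℓpos.ne')
    have hτyint : IsIntegral ℤ (τ y) := hyint.map (τ.restrictScalars ℤ)
    have hτβ : τ β = (c : L) * (τ y) + (d : L) := by
      rw [hβ_def, map_add, map_mul, map_intCast, map_intCast]
    have hζ'1 : τ β / β = 1 := by
      refine aux_root_of_unity_eq_one y (τ y) (τ β / β) hyint hτyint c d hd hcd
        (m * (ℓ : ℤ)).natAbs hk1 (aux_zpow_one_natAbs hζ'pow) ?_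
      rw [← hτβ, div_mul_cancel₀ _ hβ]
    have hτβ' : τ β = β := by
      field_simp at hζ'1
      exact hζ'1
    have hτy : τ y = y := by
      have h3 : (c : L) * (τ y) + (d : L) = (c : L) * y + (d : L) := by rw [← hτβ, hτβ']
      exact mul_left_cancel₀ hcL (add_right_cancel h3)
    -- conclude τ = 1
    have htop : (⊤ : IntermediateField K L) ≤ fixedField (Subgroup.zpowers τ) := by
      rw [← hxy]
      refine adjoin_le_iff.mpr ?_
      rintro z hz
      rcases hz with h | h
      · rw [show z = x from h]; exact aux_mem_fixedField τ x hτx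
      · rw [show z = y from h]; exact aux_mem_fixedField τ y hτy
    refine AlgEquiv.ext (fun z => ?_)
    exact htop (mem_top (x := z)) ⟨τ, Subgroup.mem_zpowers τ⟩
  -- conclude via the Galois correspondence
  have hfix : (IntermediateField.adjoin K {γ}).fixingSubgroup = ⊥ := by
    rw [eq_bot_iff]
    intro τ hτ
    have hτγ : τ γ = γ :=
      (mem_fixingSubgroup_iff _ τ).mp hτ γ (mem_adjoin_simple_self K γ)
    exact Subgroup.mem_bot.mpr (htriv τ hτγ)
  have h2 := IsGalois.fixedField_fixingSubgroup (IntermediateField.adjoin K {γ})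
  rw [hfix] at h2
  rw [← h2]
  exact top_unique ((le_iff_le ⊥ ⊤).mpr bot_le)
end
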